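/- Monotonicity of safety violation in the thread limit: if the petrified program P_β(prog) violates the safety specification S_safe, then for every β' ≥ β the petrified program P_{β'}(prog) also violates S_safe. -/

import Mathlib

/-! Core semantics of the concurrent language with fork/join. -/

namespace Conc

abbrev Var := String
abbrev Val := ℤ
/-- Integer-valued expressions (shallow embedding, evaluated in a combined state). -/
abbrev AExp := (Var → Val) → Val
/-- Boolean-valued expressions. -/
abbrev BExp := (Var → Val) → Prop

/-- Commands of the language, parameterized by the type `T` of thread template names. -/
inductive Cmd (T : Type) where
  | assign : Var → AExp → Cmd T
  | assume_ : BExp → Cmd T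
  | assert_ : BExp → Cmd T
  | ite : BExp → Cmd T → Cmd T → Cmd T
  | while_ : BExp → Cmd T → Cmd T
  | fork : AExp → T → Cmd T
  | join : AExp → Cmd T
  | seq : Cmd T → Cmd T → Cmd T

/-- A remainder program: a command, successful termination `Ω`, or failure `↯`. -/
inductive Rem (T : Type) where
  | run : Cmd T → Rem T
  | term : Rem T   -- Ω
  | fail : Rem T   -- ↯

/-- Sequential composition `C ; X` of a command with a remainder, with `C ; Ω = C`. -/
def Rem.after {T : Type} (C : Cmd T) : Rem T → Rem T
  | .run C' => .run (C.seq C')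
  | _ => .run C

/-- A local configuration `⟨X, θ, t, s⟩`. -/
structure LConf (T : Type) where
  rem : Rem T
  tmpl : T
  tid : Option Val
  st : Var → Val

/-- A program: bodies of thread templates, the main template, and the global variables. -/
structure Prog (T : Type) where
  body : T → Cmd T
  main : T
  isGlobal : Var → Bool

/-- Combined state `s ∪ g`. -/
def Prog.comb {T : Type} (P : Prog T) (g s : Var → Val) : Var → Val :=
  fun x => if P.isGlobal x then g x else s x

/-- Kinds of simple statements labelling a step. -/
inductive Lab (T : Type) where
  | atomic : Lab T
  | forkL : T → Lab T
  | joinL : Lab T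

/-- Global configurations: a multiset of local configurations and a global state. -/
abbrev GConf (T : Type) := Multiset (LConf T) × (Var → Val)

/-- The small-step semantic transition relation. -/
inductive Step {T : Type} (P : Prog T) : Lab T → GConf T → GConf T → Prop where
  | assume_ {e : BExp} {X θ t s g} (h : e (P.comb g s)) :
      Step P .atomic ({⟨Rem.after (.assume_ e) X, θ, t, s⟩}, g) ({⟨X, θ, t, s⟩}, g)
  | assignGlobal {x e X θ t s g} (hx : P.isGlobal x = true) :
      Step P .atomic ({⟨Rem.after (.assign x e) X, θ, t, s⟩}, g)
        ({⟨X, θ, t, s⟩}, Function.update g x (e (P.comb g s)))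
  | assignLocal {x e X θ t s g} (hx : P.isGlobal x = false) :
      Step P .atomic ({⟨Rem.after (.assign x e) X, θ, t, s⟩}, g)
        ({⟨X, θ, t, Function.update s x (e (P.comb g s))⟩}, g)
  | assert₁ {e : BExp} {X θ t s g} (h : e (P.comb g s)) :
      Step P .atomic ({⟨Rem.after (.assert_ e) X, θ, t, s⟩}, g) ({⟨X, θ, t, s⟩}, g)
  | assert₂ {e : BExp} {X θ t s g} (h : ¬ e (P.comb g s)) :
      Step P .atomic ({⟨Rem.after (.assert_ e) X, θ, t, s⟩}, g) ({⟨.fail, θ, t, s⟩}, g)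
  | ite₁ {e C₁ C₂ X θ t s g} (h : e (P.comb g s)) :
      Step P .atomic ({⟨Rem.after (.ite e C₁ C₂) X, θ, t, s⟩}, g)
        ({⟨Rem.after C₁ X, θ, t, s⟩}, g)
  | ite₂ {e C₁ C₂ X θ t s g} (h : ¬ e (P.comb g s)) :
      Step P .atomic ({⟨Rem.after (.ite e C₁ C₂) X, θ, t, s⟩}, g)
        ({⟨Rem.after C₂ X, θ, t, s⟩}, g)
  | while₁ {e C X θ t s g} (h : e (P.comb g s)) :
      Step P .atomic ({⟨Rem.after (.while_ e C) X, θ, t, s⟩}, g)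
        ({⟨Rem.after C (Rem.after (.while_ e C) X), θ, t, s⟩}, g)
  | while₂ {e C X θ t s g} (h : ¬ e (P.comb g s)) :
      Step P .atomic ({⟨Rem.after (.while_ e C) X, θ, t, s⟩}, g) ({⟨X, θ, t, s⟩}, g)
  | fork {e θ' X θ t s s' g} :
      Step P (.forkL θ') ({⟨Rem.after (.fork e θ') X, θ, t, s⟩}, g)
        ({⟨X, θ, t, s⟩, ⟨.run (P.body θ'), θ', some (e (P.comb g s)), s'⟩}, g)
  | join {e X θ t s θ' s' g} :
      Step P .joinL
        ({⟨Rem.after (.join e) X, θ, t, s⟩, ⟨.term, θ', some (e (P.comb g s)), s'⟩}, g)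
        ({⟨X, θ, t, s⟩}, g)
  | frame {l M₁ M₁' M₂ g g'} :
      Step P l (M₁, g) (M₁', g') → Step P l (M₁ + M₂, g) (M₁' + M₂, g')

/-- Initial global configurations. -/
def IsInit {T : Type} (P : Prog T) (c : GConf T) : Prop :=
  ∃ s, c.1 = {⟨.run (P.body P.main), P.main, none, s⟩}

/-- `cfg 0 → cfg 1 → … → cfg n` is an execution with statement kinds `lab`. -/
def IsExec {T : Type} (P : Prog T) (n : ℕ) (cfg : ℕ → GConf T) (lab : ℕ → Lab T) : Prop :=
  IsInit P (cfg 0) ∧ ∀ i < n, Step P (lab i) (cfg i) (cfg (i + 1))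

/-- The number of local configurations with thread template `θ` in `M`. -/
def tmplCount {T : Type} [DecidableEq T] (M : Multiset (LConf T)) (θ : T) : ℕ :=
  Multiset.card (M.filter (fun c => c.tmpl = θ))

/-- The thread width of the program `P` is at most `β`. -/
def WidthLe {T : Type} [DecidableEq T] (P : Prog T) (β : ℕ) : Prop :=
  ∀ n cfg lab, IsExec P n cfg lab → ∀ i ≤ n, ∀ θ, tmplCount (cfg i).1 θ ≤ β

/-- `P` is correct: no execution reaches the failure marker `↯`. -/
def Correct {T : Type} (P : Prog T) : Prop :=
  ¬ ∃ n cfg lab, IsExec P n cfg lab ∧ ∃ i ≤ n, ∃ c ∈ (cfg i).1, c.rem = Rem.fail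

end Conc

/-! Petrification: the petrified program `P_β(prog)` as a Petri program. -/

namespace Conc

/-- Places of the petrified program with thread limit `β`. -/
inductive PPlace (T : Type) (β : ℕ) where
  | loc : Rem T → T → Option (Fin β) → PPlace T β
  | inUse : T → Fin β → PPlace T β
  | notInUse : T → Fin β → PPlace T β
  | insuff : T → PPlace T β

/-- Instantiated variables of the petrified program. -/
inductive IVar (T : Type) (β : ℕ) where
  | glob : Var → IVar T β
  | inst : Var → T → Option (Fin β) → IVar T β
  | idv : T → Fin β → IVar T β
deriving DecidableEq

/-- States of the petrified (Petri) program. -/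
abbrev IState (T : Type) (β : ℕ) := IVar T β → Val

/-- De-instantiated view of an instantiated state for thread instance `(θ, k)`. -/
def iev {T : Type} {β : ℕ} (P : Prog T) (σ : IState T β) (θ : T) (k : Option (Fin β)) :
    Var → Val :=
  fun x => if P.isGlobal x then σ (.glob x) else σ (.inst x θ k)

/-- Semantics of the instantiated assignment `[x := e]_{θ,k}`. -/
def assignRel {T : Type} {β : ℕ} [DecidableEq T] (P : Prog T) (x : Var) (e : AExp)
    (θ : T) (k : Option (Fin β)) : IState T β → IState T β → Prop :=
  fun σ σ' =>
    σ' = if P.isGlobal x then Function.update σ (.glob x) (e (iev P σ θ k))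
         else Function.update σ (.inst x θ k) (e (iev P σ θ k))

/-- Semantics of the instantiated statement `[assume e]_{θ,k}`. -/
def assumeRel {T : Type} {β : ℕ} (P : Prog T) (e : BExp) (θ : T) (k : Option (Fin β)) :
    IState T β → IState T β → Prop :=
  fun σ σ' => σ' = σ ∧ e (iev P σ θ k)

/-- Semantics of the fork label `id_{θ'}^{k'} := [e]_{θ,k}`. -/
def forkRel {T : Type} {β : ℕ} [DecidableEq T] (P : Prog T) (e : AExp)
    (θ : T) (k : Option (Fin β)) (θ' : T) (k' : Fin β) : IState T β → IState T β → Prop :=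
  fun σ σ' => σ' = Function.update σ (.idv θ' k') (e (iev P σ θ k))

/-- Semantics of the join label `assume id_{θ'}^{k'} == [e]_{θ,k}`. -/
def joinRel {T : Type} {β : ℕ} (P : Prog T) (e : AExp)
    (θ : T) (k : Option (Fin β)) (θ' : T) (k' : Fin β) : IState T β → IState T β → Prop :=
  fun σ σ' => σ' = σ ∧ σ (.idv θ' k') = e (iev P σ θ k)

/-- The control-flow relation of petrification: `pre ⟶[R] post`, where transitions are
labelled with the semantic relation `R` of their instantiated simple statement. -/
inductive PTrans {T : Type} {β : ℕ} [DecidableEq T] (P : Prog T) :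
    Set (PPlace T β) → (IState T β → IState T β → Prop) → Set (PPlace T β) → Prop where
  | assume_ (e : BExp) (X : Rem T) (θ : T) (k : Option (Fin β)) :
      PTrans P {.loc (Rem.after (.assume_ e) X) θ k} (assumeRel P e θ k) {.loc X θ k}
  | assign (x : Var) (e : AExp) (X : Rem T) (θ : T) (k : Option (Fin β)) :
      PTrans P {.loc (Rem.after (.assign x e) X) θ k} (assignRel P x e θ k) {.loc X θ k}
  | assert₁ (e : BExp) (X : Rem T) (θ : T) (k : Option (Fin β)) :
      PTrans P {.loc (Rem.after (.assert_ e) X) θ k} (assumeRel P e θ k) {.loc X θ k}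
  | assert₂ (e : BExp) (X : Rem T) (θ : T) (k : Option (Fin β)) :
      PTrans P {.loc (Rem.after (.assert_ e) X) θ k}
        (assumeRel P (fun v => ¬ e v) θ k) {.loc Rem.fail θ k}
  | ite₁ (e : BExp) (C₁ C₂ : Cmd T) (X : Rem T) (θ : T) (k : Option (Fin β)) :
      PTrans P {.loc (Rem.after (.ite e C₁ C₂) X) θ k} (assumeRel P e θ k)
        {.loc (Rem.after C₁ X) θ k}
  | ite₂ (e : BExp) (C₁ C₂ : Cmd T) (X : Rem T) (θ : T) (k : Option (Fin β)) :
      PTrans P {.loc (Rem.after (.ite e C₁ C₂) X) θ k} (assumeRel P (fun v => ¬ e v) θ k)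
        {.loc (Rem.after C₂ X) θ k}
  | while₁ (e : BExp) (C : Cmd T) (X : Rem T) (θ : T) (k : Option (Fin β)) :
      PTrans P {.loc (Rem.after (.while_ e C) X) θ k} (assumeRel P e θ k)
        {.loc (Rem.after C (Rem.after (.while_ e C) X)) θ k}
  | while₂ (e : BExp) (C : Cmd T) (X : Rem T) (θ : T) (k : Option (Fin β)) :
      PTrans P {.loc (Rem.after (.while_ e C) X) θ k} (assumeRel P (fun v => ¬ e v) θ k)
        {.loc X θ k}
  | fork (e : AExp) (θ' : T) (X : Rem T) (θ : T) (k : Option (Fin β)) (k' : Fin β) :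
      PTrans P
        ({.loc (Rem.after (.fork e θ') X) θ k, .notInUse θ' k'} ∪
          (PPlace.inUse θ') '' {j | j < k'})
        (forkRel P e θ k θ' k')
        ({.loc X θ k, .loc (.run (P.body θ')) θ' (some k'), .inUse θ' k'} ∪
          (PPlace.inUse θ') '' {j | j < k'})
  | insufficiency (e : AExp) (θ' : T) (X : Rem T) (θ : T) (k : Option (Fin β)) :
      PTrans P
        ({.loc (Rem.after (.fork e θ') X) θ k} ∪ (PPlace.inUse θ') '' Set.univ)
        (fun σ σ' => σ' = σ)
        {.insuff θ'}
  | join (e : AExp) (X : Rem T) (θ : T) (k : Option (Fin β)) (θ' : T) (k' : Fin β) :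
      PTrans P {.loc (Rem.after (.join e) X) θ k, .loc Rem.term θ' (some k'), .inUse θ' k'}
        (joinRel P e θ k θ' k')
        {.loc X θ k, .notInUse θ' k'}

/-- Initial marking of the petrified program. -/
def initMark {T : Type} (P : Prog T) (β : ℕ) : Set (PPlace T β) :=
  {PPlace.loc (.run (P.body P.main)) P.main none} ∪ {p | ∃ θ k, p = PPlace.notInUse θ k}

/-- Reachability of a marking together with a semantically consistent state
(markings of the 1-safe petrified program are identified with sets of places). -/
inductive PReach {T : Type} [DecidableEq T] (P : Prog T) (β : ℕ) :
    Set (PPlace T β) → IState T β → Prop where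
  | init (σ : IState T β) : PReach P β (initMark P β) σ
  | step {m σ pre R post σ'} : PReach P β m σ → PTrans P pre R post → pre ⊆ m →
      R σ σ' → PReach P β ((m \ pre) ∪ post) σ'

/-- The petrified program satisfies the specification `S` (a set of bad places):
no semantically executable firing sequence reaches a marking intersecting `S`. -/
def Satisfies {T : Type} [DecidableEq T] (P : Prog T) (β : ℕ) (S : Set (PPlace T β)) : Prop :=
  ¬ ∃ m σ, PReach P β m σ ∧ (m ∩ S).Nonempty

/-- The safety specification `S_safe`. -/
def Ssafe (T : Type) (β : ℕ) : Set (PPlace T β) :=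
  {p | ∃ θ k, p = PPlace.loc Rem.fail θ k}

/-- The bound specification `S_bound`. -/
def Sbound (T : Type) (β : ℕ) : Set (PPlace T β) :=
  {p | ∃ θ, p = PPlace.insuff θ}

end Conc

namespace SafetyMono
open Conc

variable {T : Type} [DecidableEq T] {β β' : ℕ}

def embP (hle : β ≤ β') : PPlace T β → PPlace T β'
  | .loc X θ k => .loc X θ (k.map (Fin.castLE hle))
  | .inUse θ k => .inUse θ (Fin.castLE hle k)
  | .notInUse θ k => .notInUse θ (Fin.castLE hle k)
  | .insuff θ => .insuff θ

def embV (hle : β ≤ β') : IVar T β → IVar T β'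
  | .glob x => .glob x
  | .inst x θ k => .inst x θ (k.map (Fin.castLE hle))
  | .idv θ k => .idv θ (Fin.castLE hle k)

lemma castLE_inj (hle : β ≤ β') : Function.Injective (Fin.castLE hle) :=
  fun a b hab => Fin.ext (by simpa using congrArg Fin.val hab)

lemma embP_inj (hle : β ≤ β') : Function.Injective (embP (T := T) hle) := by
  intro p q h
  cases p <;> cases q <;> simp only [embP] at h <;> try (simp at h; done)
  · obtain ⟨h1, h2, h3⟩ := PPlace.loc.inj h
    rw [h1, h2, Option.map_injective (castLE_inj hle) h3]
  · obtain ⟨h1, h2⟩ := PPlace.inUse.inj h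
    rw [h1, castLE_inj hle h2]
  · obtain ⟨h1, h2⟩ := PPlace.notInUse.inj h
    rw [h1, castLE_inj hle h2]
  · rw [PPlace.insuff.inj h]

lemma embV_inj (hle : β ≤ β') : Function.Injective (embV (T := T) hle) := by
  intro p q h
  cases p <;> cases q <;> simp only [embV] at h <;> try (simp at h; done)
  · rw [IVar.glob.inj h]
  · obtain ⟨h1, h2, h3⟩ := IVar.inst.inj h
    rw [h1, h2, Option.map_injective (castLE_inj hle) h3]
  · obtain ⟨h1, h2⟩ := IVar.idv.inj h
    rw [h1, castLE_inj hle h2]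

def Agree (hle : β ≤ β') (σ' : IState T β') (σ : IState T β) : Prop :=
  ∀ v, σ' (embV hle v) = σ v

noncomputable def extend (hle : β ≤ β') (σ : IState T β) : IState T β' :=
  fun v' => @dite _ (∃ v, embV hle v = v') (Classical.propDecidable _)
    (fun h => σ h.choose) (fun _ => 0)

lemma extend_agree (hle : β ≤ β') (σ : IState T β) : Agree hle (extend hle σ) σ := by
  intro v
  have h : ∃ w, embV (T := T) hle w = embV hle v := ⟨v, rfl⟩
  show @dite _ _ (Classical.propDecidable _) _ _ = σ v
  rw [dif_pos h]
  exact congrArg σ (embV_inj hle h.choose_spec)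

lemma iev_agree (hle : β ≤ β') (P : Prog T) {sb : IState T β'} {σ : IState T β}
    (hag : Agree hle sb σ) (θ : T) (k : Option (Fin β)) :
    iev P sb θ (k.map (Fin.castLE hle)) = iev P σ θ k := by
  funext x
  unfold iev
  by_cases hx : P.isGlobal x
  · simp only [hx, if_true]
    exact hag (.glob x)
  · simp only [hx, if_false, Bool.false_eq_true]
    exact hag (.inst x θ k)

lemma agree_update (hle : β ≤ β') {sb : IState T β'} {σ : IState T β}
    (hag : Agree hle sb σ) (v : IVar T β) (a : Val) :
    Agree hle (Function.update sb (embV hle v) a) (Function.update σ v a) := by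
  intro w
  rcases eq_or_ne w v with rfl | hw
  · simp
  · rw [Function.update_of_ne (fun hc => hw (embV_inj hle hc)),
      Function.update_of_ne hw]
    exact hag w

lemma image_lt (hle : β ≤ β') (k' : Fin β) :
    Fin.castLE hle '' {j | j < k'} = {j : Fin β' | j < Fin.castLE hle k'} := by
  ext j
  simp only [Set.mem_setOf_eq, Set.mem_image]
  constructor
  · rintro ⟨i, hi, rfl⟩
    exact hi
  · intro hj
    have hj' : j.val < k'.val := hj
    exact ⟨⟨j.val, lt_of_lt_of_le hj' (le_of_lt k'.isLt)⟩, hj', Fin.ext rfl⟩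

lemma embP_image_inUse (hle : β ≤ β') (θ' : T) (S : Set (Fin β)) :
    embP (T := T) hle '' ((PPlace.inUse θ') '' S)
      = (PPlace.inUse θ') '' (Fin.castLE hle '' S) := by
  rw [Set.image_image, Set.image_image]
  rfl

lemma fire (hle : β ≤ β') {P : Prog T} {m : Set (PPlace T β)}
    {mb : Set (PPlace T β')} {sb : IState T β'}
    {pre post : Set (PPlace T β)} {σ' : IState T β}
    {pre' post' : Set (PPlace T β')} {R' : IState T β' → IState T β' → Prop}
    {sb' : IState T β'}
    (hre : PReach P β' mb sb)
    (hinv : ∀ p ∈ m, (∀ θ, p ≠ PPlace.insuff θ) → embP hle p ∈ mb)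
    (ht' : PTrans P pre' R' post')
    (hsub : pre ⊆ m)
    (hpreNI : ∀ p ∈ pre, ∀ θ, p ≠ PPlace.insuff θ)
    (hpre : pre' = embP hle '' pre)
    (hpost : post' = embP hle '' post)
    (hR' : R' sb sb')
    (hag' : Agree hle sb' σ') :
    ∃ mb' sb'', PReach P β' mb' sb'' ∧
      (∀ p ∈ (m \ pre) ∪ post, (∀ θ, p ≠ PPlace.insuff θ) → embP hle p ∈ mb') ∧
      Agree hle sb'' σ' := by
  refine ⟨(mb \ pre') ∪ post', sb', PReach.step hre ht' ?_ hR', ?_, hag'⟩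
  · rw [hpre]
    rintro _ ⟨q, hq, rfl⟩
    exact hinv q (hsub hq) (hpreNI q hq)
  · rintro p (⟨hpm, hpp⟩ | hp) hni
    · refine Or.inl ⟨hinv p hpm hni, ?_⟩
      rw [hpre]
      rintro ⟨q, hq, hqe⟩
      exact hpp ((embP_inj hle hqe) ▸ hq)
    · exact Or.inr (hpost ▸ ⟨p, hp, rfl⟩)

lemma sim (hle : β ≤ β') {P : Prog T} {m : Set (PPlace T β)} {σ : IState T β}
    (h : PReach P β m σ) :
    ∃ mb sb, PReach P β' mb sb ∧
      (∀ p ∈ m, (∀ θ, p ≠ PPlace.insuff θ) → embP hle p ∈ mb) ∧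
      Agree hle sb σ := by
  induction h with
  | init σ =>
    refine ⟨initMark P β', extend hle σ, .init _, ?_, extend_agree hle σ⟩
    rintro p hp -
    rcases hp with hp | ⟨θ, k, rfl⟩
    · rw [Set.mem_singleton_iff] at hp
      subst hp
      exact Or.inl rfl
    · exact Or.inr ⟨θ, Fin.castLE hle k, rfl⟩
  | @step m σ pre R post σ' hm ht hsub hR ih =>
    obtain ⟨mb, sb, hre', hinv, hag⟩ := ih
    cases ht with
    | assume_ e X θ k =>
      refine fire hle hre' hinv (PTrans.assume_ e X θ (k.map (Fin.castLE hle))) hsub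
        (by rintro p hp θ₀ rfl; simp at hp) (by rw [Set.image_singleton]; rfl) (by rw [Set.image_singleton]; rfl)
        ⟨rfl, ?_⟩ (by rw [hR.1]; exact hag)
      rw [iev_agree hle P hag]
      exact hR.2
    | assign x e X θ k =>
      refine fire hle hre' hinv (PTrans.assign x e X θ (k.map (Fin.castLE hle))) hsub
        (by rintro p hp θ₀ rfl; simp at hp) (by rw [Set.image_singleton]; rfl) (by rw [Set.image_singleton]; rfl)
        rfl ?_
      rw [hR]
      by_cases hx : P.isGlobal x
      · simp only [hx, if_true]
        rw [iev_agree hle P hag]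
        exact agree_update hle hag (.glob x) _
      · simp only [hx, if_false, Bool.false_eq_true]
        rw [iev_agree hle P hag]
        exact agree_update hle hag (.inst x θ k) _
    | assert₁ e X θ k =>
      refine fire hle hre' hinv (PTrans.assert₁ e X θ (k.map (Fin.castLE hle))) hsub
        (by rintro p hp θ₀ rfl; simp at hp) (by rw [Set.image_singleton]; rfl) (by rw [Set.image_singleton]; rfl)
        ⟨rfl, ?_⟩ (by rw [hR.1]; exact hag)
      rw [iev_agree hle P hag]
      exact hR.2
    | assert₂ e X θ k =>
      refine fire hle hre' hinv (PTrans.assert₂ e X θ (k.map (Fin.castLE hle))) hsub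
        (by rintro p hp θ₀ rfl; simp at hp) (by rw [Set.image_singleton]; rfl) (by rw [Set.image_singleton]; rfl)
        ⟨rfl, ?_⟩ (by rw [hR.1]; exact hag)
      rw [iev_agree hle P hag]
      exact hR.2
    | ite₁ e C₁ C₂ X θ k =>
      refine fire hle hre' hinv (PTrans.ite₁ e C₁ C₂ X θ (k.map (Fin.castLE hle))) hsub
        (by rintro p hp θ₀ rfl; simp at hp) (by rw [Set.image_singleton]; rfl) (by rw [Set.image_singleton]; rfl)
        ⟨rfl, ?_⟩ (by rw [hR.1]; exact hag)
      rw [iev_agree hle P hag]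
      exact hR.2
    | ite₂ e C₁ C₂ X θ k =>
      refine fire hle hre' hinv (PTrans.ite₂ e C₁ C₂ X θ (k.map (Fin.castLE hle))) hsub
        (by rintro p hp θ₀ rfl; simp at hp) (by rw [Set.image_singleton]; rfl) (by rw [Set.image_singleton]; rfl)
        ⟨rfl, ?_⟩ (by rw [hR.1]; exact hag)
      rw [iev_agree hle P hag]
      exact hR.2
    | while₁ e C X θ k =>
      refine fire hle hre' hinv (PTrans.while₁ e C X θ (k.map (Fin.castLE hle))) hsub
        (by rintro p hp θ₀ rfl; simp at hp) (by rw [Set.image_singleton]; rfl) (by rw [Set.image_singleton]; rfl)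
        ⟨rfl, ?_⟩ (by rw [hR.1]; exact hag)
      rw [iev_agree hle P hag]
      exact hR.2
    | while₂ e C X θ k =>
      refine fire hle hre' hinv (PTrans.while₂ e C X θ (k.map (Fin.castLE hle))) hsub
        (by rintro p hp θ₀ rfl; simp at hp) (by rw [Set.image_singleton]; rfl) (by rw [Set.image_singleton]; rfl)
        ⟨rfl, ?_⟩ (by rw [hR.1]; exact hag)
      rw [iev_agree hle P hag]
      exact hR.2
    | fork e θ' X θ k k' =>
      refine fire hle hre' hinv
        (PTrans.fork e θ' X θ (k.map (Fin.castLE hle)) (Fin.castLE hle k')) hsub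
        (by rintro p hp θ₀ rfl; simp at hp) ?_ ?_ rfl ?_
      · rw [Set.image_union, Set.image_insert_eq, Set.image_singleton,
          embP_image_inUse, image_lt]
        rfl
      · rw [Set.image_union, Set.image_insert_eq, Set.image_insert_eq,
          Set.image_singleton, embP_image_inUse, image_lt]
        rfl
      · rw [hR]
        rw [iev_agree hle P hag]
        exact agree_update hle hag (.idv θ' k') _
    | join e X θ k θ' k' =>
      refine fire hle hre' hinv
        (PTrans.join e X θ (k.map (Fin.castLE hle)) θ' (Fin.castLE hle k')) hsub
        (by rintro p hp θ₀ rfl; simp at hp)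
        (by simp [Set.image_insert_eq, embP]) (by simp [Set.image_insert_eq, embP])
        ⟨rfl, ?_⟩ (by rw [hR.1]; exact hag)
      rw [iev_agree hle P hag]
      exact (hag (.idv θ' k')).trans hR.2
    | insufficiency e θ' X θ k =>
      refine ⟨mb, sb, hre', ?_, by rw [hR]; exact hag⟩
      rintro p (⟨hpm, -⟩ | hp) hni
      · exact hinv p hpm hni
      · rw [Set.mem_singleton_iff] at hp
        exact absurd hp (hni θ')

end SafetyMono


open Conc in
/-- monotonicity of safety violation in the thread limit — if `P_β(prog)`
violates `S_safe`, then so does `P_β'(prog)` for every `β' ≥ β`. -/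
theorem safety_violation_monotone {T : Type} [DecidableEq T] (P : Prog T) (β β' : ℕ)
    (h : ¬ Satisfies P β (Ssafe T β)) (hle : β ≤ β') :
    ¬ Satisfies P β' (Ssafe T β') := by
  intro hsat'
  apply h
  rintro ⟨m, σ, hre, p, hpm, hps⟩
  obtain ⟨mb, sb, hre', hinv, -⟩ := SafetyMono.sim hle hre
  obtain ⟨θ, k, rfl⟩ := hps
  refine hsat' ⟨mb, sb, hre', SafetyMono.embP hle (.loc .fail θ k), ?_, ⟨θ, _, rfl⟩⟩
  exact hinv _ hpm (by rintro θ₀ hc; exact nomatch hc)
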